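/- Let G be a nontrivial totally ordered abelian group, let a be a positive element of G, and let M_a = {0} ∪ {g ∈ G : g ≥ a}. Then the set of atoms of M_a is exactly the interval [a, 2a) = {g ∈ G : a ≤ g < 2a}. -/

import Mathlib

/-- `x` is invertible within the subset `S` of the ambient monoid. -/
def SUnit {A : Type*} [AddCommMonoid A] (S : Set A) (x : A) : Prop := ∃ y ∈ S, x + y = 0

/-- `a` is an atom of the subset (submonoid) `S`: it is non-invertible in `S` and
cannot be written as a sum of two non-invertible elements of `S`. -/
def SAtom {A : Type*} [AddCommMonoid A] (S : Set A) (a : A) : Prop :=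
  a ∈ S ∧ ¬ SUnit S a ∧ ∀ b ∈ S, ∀ c ∈ S, a = b + c → SUnit S b ∨ SUnit S c

/-- `x` is an atomic element of `S`: invertible in `S` or a finite sum of atoms of `S`. -/
def SAtomicElem {A : Type*} [AddCommMonoid A] (S : Set A) (x : A) : Prop :=
  SUnit S x ∨ ∃ l : Multiset A, (∀ a ∈ l, SAtom S a) ∧ l.sum = x

/-- The subset (submonoid) `S` is atomic. -/
def SAtomic {A : Type*} [AddCommMonoid A] (S : Set A) : Prop :=
  ∀ x ∈ S, SAtomicElem S x

lemma sunit_iff {G : Type*} [AddCommGroup G] [LinearOrder G] [IsOrderedAddMonoid G] (a : G) (x : G) :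
    SUnit ({0} ∪ Set.Ici a : Set G) x ↔ x = 0 ∨ x ≤ -a := by
  constructor
  · rintro ⟨y, hy | hy, hxy⟩
    · left
      simp only [Set.mem_singleton_iff] at hy
      subst hy; simpa using hxy
    · right
      have hay : a ≤ y := hy
      have hx : x = -y := eq_neg_of_add_eq_zero_left hxy
      rw [hx]
      exact neg_le_neg hay
  · rintro (rfl | h)
    · exact ⟨0, Or.inl rfl, by simp⟩
    · refine ⟨-x, Or.inr ?_, by simp⟩
      have := neg_le_neg h
      simpa using this

/-- In a nontrivial totally ordered abelian group `G` with `a > 0`, the set of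
atoms of the conductive positive monoid `M_a = {0} ∪ G_{≥ a}` is exactly the
interval `[a, 2a)`. -/
theorem atoms_of_conductive_monoid {G : Type*} [AddCommGroup G] [LinearOrder G]
    [IsOrderedAddMonoid G] [Nontrivial G] (a : G) (ha : 0 < a) :
    {x : G | SAtom ({0} ∪ Set.Ici a : Set G) x} = Set.Ico a (a + a) := by
  have hna : ¬ (a ≤ -a) := fun h => absurd (h.trans_lt (neg_lt_zero.mpr ha)) (not_lt.mpr ha.le)
  ext x
  simp only [Set.mem_setOf_eq, Set.mem_Ico, SAtom]
  constructor
  · rintro ⟨hx, hnu, hdec⟩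
    have hx' : a ≤ x := by
      rcases hx with h | h
      · exact absurd ((sunit_iff a x).mpr (Or.inl h)) hnu
      · exact h
    refine ⟨hx', ?_⟩
    by_contra hlt
    push_neg at hlt
    have hb : (a : G) ∈ ({0} ∪ Set.Ici a : Set G) := Or.inr (le_refl a)
    have hca : a ≤ x - a := by rwa [le_sub_iff_add_le, add_comm]
    have hc : x - a ∈ ({0} ∪ Set.Ici a : Set G) := Or.inr hca
    rcases hdec a hb (x - a) hc (by abel) with h | h
    · rcases (sunit_iff a a).mp h with h | h
      · exact absurd h ha.ne'
      · exact hna h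
    · rcases (sunit_iff a (x - a)).mp h with h | h
      · exact absurd (h ▸ hca : a ≤ (0:G)) (not_le.mpr ha)
      · exact hna (hca.trans h)
  · rintro ⟨hax, hlt⟩
    have hxpos : 0 < x := ha.trans_le hax
    refine ⟨Or.inr hax, ?_, ?_⟩
    · rw [sunit_iff a]
      push_neg
      exact ⟨hxpos.ne', (neg_lt_zero.mpr ha).trans hxpos⟩
    · rintro b hb c hc rfl
      rcases hb with hb | hb
      · exact Or.inl ((sunit_iff a b).mpr (Or.inl hb))
      · rcases hc with hc | hc
        · exact Or.inr ((sunit_iff a c).mpr (Or.inl hc))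
        · exact absurd ((add_le_add hb hc).trans_lt hlt) (lt_irrefl _)
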